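/- Identifiability of the probability of sufficiency in the chain CBN U → X → Y with binary variables: in any causal model i-compatible with this CBN, Pr(X=0 ∧ Y=0 ∧ [X←1](Y=1)) = a·b·d·(1−e) + (1−a)·c·d·(1−e), where a = P(U=0), b = P(X=0|U=0), c = P(X=0|U=1), d = P(Y=0|X=0), e = P(Y=0|X=1). -/

import Mathlib

/-- A functional causal model: `F X e s` gives the value of the endogenous
variable `X` given the context `e` (values of the exogenous variables) and
the values `s` of the other endogenous variables. -/
structure CM (E V α : Type) where
  F : V → E → (V → α) → α

/-- `s` is a solution of all the structural equations of `M` in context `e`. -/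
def Solves {E V α : Type} (M : CM E V α) (e : E) (s : V → α) : Prop :=
  ∀ X, s X = M.F X e s

/-- `M` is recursive (acyclic): there is a strict total order `r` on the
endogenous variables such that if `r X Y` then the equation for `X`
does not depend on the value of `Y`. -/
def Recursive {E V α : Type} (M : CM E V α) : Prop :=
  ∃ r : V → V → Prop, IsStrictTotalOrder V r ∧
    ∀ X Y, r X Y → ∀ e s s', (∀ Z, Z ≠ Y → s Z = s' Z) → M.F X e s = M.F X e s'

/-- Intervention: replace the equation of every variable `X` with `I X = some x`
by the constant equation `X = x`. -/
def intervene {E V α : Type} (M : CM E V α) (I : V → Option α) : CM E V α :=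
  ⟨fun X e s => (I X).getD (M.F X e s)⟩

/-- Causal formulas: primitive events `X = x`, Boolean combinations, and
intervention formulas `[I]φ`. -/
inductive Formula (V α : Type) where
  | eq  : V → α → Formula V α
  | neg : Formula V α → Formula V α
  | and : Formula V α → Formula V α → Formula V α
  | or  : Formula V α → Formula V α → Formula V α
  | int : (V → Option α) → Formula V α → Formula V α

/-- Satisfaction of a formula in a causal setting `(M, e)`: primitive events
hold in the (unique, for recursive models) solution, and `[I]φ` holds iff
`φ` holds in the intervened model. -/
def Sat {E V α : Type} : CM E V α → E → Formula V α → Prop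
  | M, e, .eq X x => ∀ s, Solves M e s → s X = x
  | M, e, .neg φ => ¬ Sat M e φ
  | M, e, .and φ ψ => Sat M e φ ∧ Sat M e ψ
  | M, e, .or φ ψ => Sat M e φ ∨ Sat M e ψ
  | M, e, .int I φ => Sat (intervene M I) e φ

/-- The single intervention `Y ← y`. -/
def single {V α : Type} [DecidableEq V] (Y : V) (y : α) : V → Option α :=
  fun Z => if Z = Y then some y else none

/-- The probability of a set of contexts under the distribution `p`. -/
noncomputable def PrOf {E : Type} [Fintype E] (p : E → ℝ) (S : Set E) : ℝ :=
  ∑ e, S.indicator p e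

/-- The probability of a formula: the probability of the set of contexts in
which it holds. -/
noncomputable def prF {E V α : Type} [Fintype E] (p : E → ℝ) (M : CM E V α)
    (φ : Formula V α) : ℝ :=
  PrOf p {e | Sat M e φ}

/-- Mutual independence of a family of families of events: for every finite
collection of indices and every choice of one event per index, the probability
of the intersection is the product of the probabilities. -/
def MutIndep {E : Type} [Fintype E] {ι : Type} {κ : ι → Type} (p : E → ℝ)
    (ev : (i : ι) → κ i → Set E) : Prop :=
  ∀ (s : Finset ι) (f : (i : ι) → κ i),
    PrOf p (⋂ i ∈ s, ev i (f i)) = ∏ i ∈ s, PrOf p (ev i (f i))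

/-- The three variables of the CBN: `vU` (the root), `vX`, `vY`. -/
inductive V3 : Type where
  | vU | vX | vY
deriving DecidableEq

instance instFintypeV3 : Fintype V3 :=
  ⟨{V3.vU, V3.vX, V3.vY}, fun x => by cases x <;> decide⟩

open V3

/-- The conditional events of the chain CBN `U → X → Y`, as events of a
compatible causal model: the value of `U`; the value of `X` given `U = 0`,
resp. `U = 1`; and the value of `Y` given `X = 0`, resp. `X = 1`
(conditional events are interpreted as intervention formulas). -/
def ev15 {E : Type} (M : CM E V3 Bool) : Fin 5 → Bool → Set E
  | ⟨0, _⟩ => fun v => {e | Sat M e (.eq vU v)}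
  | ⟨1, _⟩ => fun v => {e | Sat M e (.int (single vU false) (.eq vX v))}
  | ⟨2, _⟩ => fun v => {e | Sat M e (.int (single vU true) (.eq vX v))}
  | ⟨3, _⟩ => fun v => {e | Sat M e (.int (single vX false) (.eq vY v))}
  | ⟨4, _⟩ => fun v => {e | Sat M e (.int (single vX true) (.eq vY v))}

section Aux

variable {E : Type}

/-- The canonical solution values of a "chain-structured" model. -/
def cUu (N : CM E V3 Bool) (e : E) : Bool := N.F vU e (fun _ => false)
def cXx (N : CM E V3 Bool) (e : E) : Bool := N.F vX e (fun _ => cUu N e)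
def cYy (N : CM E V3 Bool) (e : E) : Bool := N.F vY e (fun _ => cXx N e)

def chainT (N : CM E V3 Bool) (e : E) : V3 → Bool
  | vU => cUu N e
  | vX => cXx N e
  | vY => cYy N e

theorem sat_eq_iff (N : CM E V3 Bool)
    (hU : ∀ e s s', N.F vU e s = N.F vU e s')
    (hX : ∀ e s s', s vU = s' vU → N.F vX e s = N.F vX e s')
    (hY : ∀ e s s', s vX = s' vX → N.F vY e s = N.F vY e s')
    (e : E) (v : V3) (b : Bool) :
    Sat N e (.eq v b) ↔ chainT N e v = b := by
  have hsol : Solves N e (chainT N e) := by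
    intro X
    cases X with
    | vU => exact hU e _ _
    | vX => exact hX e _ _ rfl
    | vY => exact hY e _ _ rfl
  constructor
  · intro h; exact h _ hsol
  · intro h s hs
    have hu : s vU = chainT N e vU := by rw [hs vU]; exact hU e _ _
    have hx : s vX = chainT N e vX := by rw [hs vX]; exact hX e _ _ hu
    have hy : s vY = chainT N e vY := by rw [hs vY]; exact hY e _ _ hx
    cases v with
    | vU => rw [hu]; exact h
    | vX => rw [hx]; exact h
    | vY => rw [hy]; exact h

theorem PrOf_union_disjoint [Fintype E] (p : E → ℝ) {S T : Set E}
    (h : Disjoint S T) : PrOf p (S ∪ T) = PrOf p S + PrOf p T := by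
  unfold PrOf
  rw [← Finset.sum_add_distrib]
  apply Finset.sum_congr rfl
  intro e _
  rw [Set.indicator_union_of_disjoint h]

theorem PrOf_compl [Fintype E] (p : E → ℝ) (hp1 : ∑ e, p e = 1) (S : Set E) :
    PrOf p Sᶜ = 1 - PrOf p S := by
  have h : PrOf p S + PrOf p Sᶜ = ∑ e, p e := by
    unfold PrOf
    rw [← Finset.sum_add_distrib]
    apply Finset.sum_congr rfl
    intro e _
    exact congrFun (Set.indicator_self_add_compl S p) e
  rw [hp1] at h
  linarith

def fX (M : CM E V3 Bool) (b : Bool) (e : E) : Bool := M.F vX e (fun _ => b)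
def fY (M : CM E V3 Bool) (b : Bool) (e : E) : Bool := M.F vY e (fun _ => b)

section Chain

variable (M : CM E V3 Bool)
    (hFU : ∀ e s s', M.F vU e s = M.F vU e s')
    (hFX : ∀ e s s', s vU = s' vU → M.F vX e s = M.F vX e s')
    (hFY : ∀ e s s', s vX = s' vX → M.F vY e s = M.F vY e s')

set_option linter.unusedSectionVars false

include hFU hFX hFY

theorem hIU (I : V3 → Option Bool) :
    ∀ e s s', (intervene M I).F vU e s = (intervene M I).F vU e s' := by
  intro e s s'
  show (I vU).getD _ = (I vU).getD _
  cases I vU with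
  | none => exact hFU e s s'
  | some x => rfl

theorem hIX (I : V3 → Option Bool) :
    ∀ e s s', s vU = s' vU → (intervene M I).F vX e s = (intervene M I).F vX e s' := by
  intro e s s' h
  show (I vX).getD _ = (I vX).getD _
  cases I vX with
  | none => exact hFX e s s' h
  | some x => rfl

theorem hIY (I : V3 → Option Bool) :
    ∀ e s s', s vX = s' vX → (intervene M I).F vY e s = (intervene M I).F vY e s' := by
  intro e s s' h
  show (I vY).getD _ = (I vY).getD _
  cases I vY with
  | none => exact hFY e s s' h
  | some x => rfl

theorem hev0 (v : Bool) : ev15 M 0 v = {e | cUu M e = v} := by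
  ext e
  exact sat_eq_iff M hFU hFX hFY e vU v

theorem hev1 (v : Bool) : ev15 M 1 v = {e | fX M false e = v} := by
  ext e
  exact sat_eq_iff _ (hIU M hFU hFX hFY _) (hIX M hFU hFX hFY _) (hIY M hFU hFX hFY _) e vX v

theorem hev2 (v : Bool) : ev15 M 2 v = {e | fX M true e = v} := by
  ext e
  exact sat_eq_iff _ (hIU M hFU hFX hFY _) (hIX M hFU hFX hFY _) (hIY M hFU hFX hFY _) e vX v

theorem hev3 (v : Bool) : ev15 M 3 v = {e | fY M false e = v} := by
  ext e
  exact sat_eq_iff _ (hIU M hFU hFX hFY _) (hIX M hFU hFX hFY _) (hIY M hFU hFX hFY _) e vY v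

theorem hev4 (v : Bool) : ev15 M 4 v = {e | fY M true e = v} := by
  ext e
  exact sat_eq_iff _ (hIU M hFU hFX hFY _) (hIX M hFU hFX hFY _) (hIY M hFU hFX hFY _) e vY v

theorem targetEq :
    {e | Sat M e (.and (.eq vX false) (.and (.eq vY false)
        (.int (single vX true) (.eq vY true))))} =
      ({e | cUu M e = false} ∩ ({e | fX M false e = false} ∩
          ({e | fY M false e = false} ∩ {e | fY M true e = true}))) ∪
      ({e | cUu M e = true} ∩ ({e | fX M true e = false} ∩
          ({e | fY M false e = false} ∩ {e | fY M true e = true}))) := by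
  ext e
  simp only [Set.mem_setOf_eq, Set.mem_union, Set.mem_inter_iff]
  show (Sat M e (.eq vX false) ∧ Sat M e (.eq vY false) ∧
      Sat (intervene M (single vX true)) e (.eq vY true)) ↔ _
  rw [sat_eq_iff M hFU hFX hFY e vX false, sat_eq_iff M hFU hFX hFY e vY false,
    sat_eq_iff _ (hIU M hFU hFX hFY _) (hIX M hFU hFX hFY _) (hIY M hFU hFX hFY _) e vY true]
  have h3 : chainT (intervene M (single vX true)) e vY = fY M true e := rfl
  have hxv : chainT M e vX = cXx M e := rfl
  have hyv : chainT M e vY = cYy M e := rfl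
  rw [h3, hxv, hyv]
  have hxF : cUu M e = false → cXx M e = fX M false e := fun h =>
    hFX e _ _ (show cUu M e = false from h)
  have hxT : cUu M e = true → cXx M e = fX M true e := fun h =>
    hFX e _ _ (show cUu M e = true from h)
  have hyF : cXx M e = false → cYy M e = fY M false e := fun h =>
    hFY e _ _ (show cXx M e = false from h)
  cases hu : cUu M e with
  | false =>
    rw [hxF hu]
    constructor
    · rintro ⟨h1, h2, h3⟩
      have hc : cXx M e = false := by rw [hxF hu]; exact h1
      rw [hyF hc] at h2
      exact Or.inl ⟨rfl, h1, h2, h3⟩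
    · rintro (⟨_, h1, h2, h3⟩ | ⟨h0, _⟩)
      · have hc : cXx M e = false := by rw [hxF hu]; exact h1
        rw [hyF hc]
        exact ⟨h1, h2, h3⟩
      · exact absurd h0 (by simp [hu])
  | true =>
    rw [hxT hu]
    constructor
    · rintro ⟨h1, h2, h3⟩
      have hc : cXx M e = false := by rw [hxT hu]; exact h1
      rw [hyF hc] at h2
      exact Or.inr ⟨rfl, h1, h2, h3⟩
    · rintro (⟨h0, _⟩ | ⟨_, h1, h2, h3⟩)
      · exact absurd h0 (by simp [hu])
      · have hc : cXx M e = false := by rw [hxT hu]; exact h1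
        rw [hyF hc]
        exact ⟨h1, h2, h3⟩

end Chain

end Aux

/-- identifiability of the probability of sufficiency in the
chain CBN `U → X → Y` with binary variables: in any causal model i-compatible
with this CBN (the cpt entries are reproduced as the probabilities of the
corresponding intervention-formula events, and these events are mutually
independent), `Pr(X=0 ∧ Y=0 ∧ [X←1](Y=1)) = a·b·d·(1−ep) + (1−a)·c·d·(1−ep)`,
where `a = P(U=0)`, `b = P(X=0|U=0)`, `c = P(X=0|U=1)`, `d = P(Y=0|X=0)`,
`ep = P(Y=0|X=1)`.  (`false` is the value 0, `true` is the value 1.) -/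
theorem stmt15 {E : Type} [Fintype E] (M : CM E V3 Bool) (hrec : Recursive M)
    (hFU : ∀ e s s', M.F vU e s = M.F vU e s')
    (hFX : ∀ e s s', s vU = s' vU → M.F vX e s = M.F vX e s')
    (hFY : ∀ e s s', s vX = s' vX → M.F vY e s = M.F vY e s')
    (p : E → ℝ) (hp0 : ∀ e, 0 ≤ p e) (hp1 : ∑ e, p e = 1)
    (a b c d ep : ℝ)
    (ha : PrOf p (ev15 M 0 false) = a) (hb : PrOf p (ev15 M 1 false) = b)
    (hc : PrOf p (ev15 M 2 false) = c) (hd : PrOf p (ev15 M 3 false) = d)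
    (he : PrOf p (ev15 M 4 false) = ep)
    (hind : MutIndep p (ev15 M)) :
    PrOf p {e | Sat M e (.and (.eq vX false) (.and (.eq vY false)
        (.int (single vX true) (.eq vY true))))} =
      a * b * d * (1 - ep) + (1 - a) * c * d * (1 - ep) := by
  classical
  have e0 := hev0 M hFU hFX hFY
  have e1 := hev1 M hFU hFX hFY
  have e2 := hev2 M hFU hFX hFY
  have e3 := hev3 M hFU hFX hFY
  have e4 := hev4 M hFU hFX hFY
  have c0 : PrOf p (ev15 M 0 true) = 1 - a := by
    have h : ev15 M 0 true = (ev15 M 0 false)ᶜ := by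
      rw [e0, e0]; ext x; simp
    rw [h, PrOf_compl p hp1, ha]
  have c4 : PrOf p (ev15 M 4 true) = 1 - ep := by
    have h : ev15 M 4 true = (ev15 M 4 false)ᶜ := by
      rw [e4, e4]; ext x; simp
    rw [h, PrOf_compl p hp1, he]
  have hi0 := hind {0, 1, 3, 4} (fun i => if i = 4 then true else false)
  have hi1 := hind {0, 2, 3, 4} (fun i => if i = 0 then true else if i = 4 then true else false)
  rw [Finset.set_biInter_insert, Finset.set_biInter_insert, Finset.set_biInter_insert,
    Finset.set_biInter_singleton, Finset.prod_insert (by decide), Finset.prod_insert (by decide),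
    Finset.prod_insert (by decide), Finset.prod_singleton] at hi0 hi1
  norm_num at hi0 hi1
  simp only [show (decide ((0:Fin 5) = 4)) = false from by decide,
    show (decide ((1:Fin 5) = 4)) = false from by decide,
    show (decide ((3:Fin 5) = 4)) = false from by decide,
    show ((decide ((2:Fin 5) = 0)) || (decide ((2:Fin 5) = 4))) = false from by decide,
    show ((decide ((3:Fin 5) = 0)) || (decide ((3:Fin 5) = 4))) = false from by decide,
    Bool.or_false, show (decide ((3:Fin 5) = 0)) = false from by decide,
    show (decide ((2:Fin 5) = 0)) = false from by decide, Bool.false_or,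
    show (decide ((2:Fin 5) = 4)) = false from by decide] at hi0 hi1
  rw [ha, hb, hd, c4, e0, e1, e3, e4] at hi0
  rw [c0, hc, hd, c4, e0, e2, e3, e4] at hi1
  have hdisj : Disjoint
      ({e | cUu M e = false} ∩ ({e | fX M false e = false} ∩
          ({e | fY M false e = false} ∩ {e | fY M true e = true})))
      ({e | cUu M e = true} ∩ ({e | fX M true e = false} ∩
          ({e | fY M false e = false} ∩ {e | fY M true e = true}))) := by
    rw [Set.disjoint_left]
    intro x hx hy
    simp only [Set.mem_inter_iff, Set.mem_setOf_eq] at hx hy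
    rw [hx.1] at hy
    exact absurd hy.1 (by simp)
  rw [targetEq M hFU hFX hFY, PrOf_union_disjoint p hdisj, hi0, hi1]
  ring
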